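/- Let b ∈ (0, 1/2) with b² · ⌈1/b⌉ ≤ 1/3 (e.g. b ≤ 1/3), and let k ≤ ⌈1/b⌉. For any string s ∈ {0,1}^k, the uniform probability 2^{-k} is at most 3 times the probability of s under the mixture (1/2)·(i.i.d. Bernoulli(1/2-b)) + (1/2)·(i.i.d. Bernoulli(1/2+b)). -/
import Mathlib

private lemma conv_aux (b : ℝ) (hb0 : 0 < b) (hb : b < 1/2) (d : ℕ) :
    2 * (1/2 : ℝ) ^ d ≤ (1/2 - b) ^ d + (1/2 + b) ^ d := by
  induction d with
  | zero => norm_num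
  | succ d ih =>
    have hp : (0:ℝ) ≤ 1/2 - b := by linarith
    have hmono : (1/2 - b : ℝ) ^ d ≤ (1/2 + b) ^ d :=
      pow_le_pow_left₀ hp (by linarith) d
    have h1 : ((1/2 : ℝ) - b) ^ (d+1) = (1/2 - b) * (1/2 - b)^d := by ring
    have h2 : ((1/2 : ℝ) + b) ^ (d+1) = (1/2 + b) * (1/2 + b)^d := by ring
    have h0 : (1/2 : ℝ) ^ (d+1) = (1/2) * (1/2)^d := by ring
    rw [h0, h1, h2]
    nlinarith [ih, mul_nonneg hb0.le (sub_nonneg.2 hmono)]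

private lemma main_aux (b : ℝ) (hb0 : 0 < b) (hb : b < 1/2)
    (hbL : b ^ 2 * (⌈1 / b⌉₊ : ℝ) ≤ 1/3) (k q0 q1 : ℕ)
    (hk : k ≤ ⌈1 / b⌉₊) (hq : q0 + q1 = k) (hle : q0 ≤ q1) :
    (1/2 : ℝ) ^ k ≤ 3 * ((1/2) * ((1/2 - b) ^ q0 * (1/2 + b) ^ q1
      + (1/2 + b) ^ q0 * (1/2 - b) ^ q1)) := by
  obtain ⟨d, rfl⟩ : ∃ d, q1 = q0 + d := ⟨q1 - q0, by omega⟩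
  have hkk : k = 2*q0 + d := by omega
  subst hkk
  -- cast facts
  have hcast : (2*q0 + d : ℝ) ≤ (⌈1/b⌉₊ : ℝ) := by exact_mod_cast hk
  have hb2 : b^2 * (q0 : ℝ) ≤ 1/6 := by
    have h1 : b^2 * (2*(q0:ℝ) + d) ≤ b^2 * (⌈1/b⌉₊ : ℝ) :=
      mul_le_mul_of_nonneg_left hcast (sq_nonneg b)
    have hd : (0:ℝ) ≤ (d:ℝ) := Nat.cast_nonneg d
    nlinarith [sq_nonneg b, mul_nonneg (sq_nonneg b) hd]
  have h4 : (0:ℝ) < 1 - 4*b^2 := by nlinarith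
  have hBern : (1:ℝ) - 4*b^2*(q0:ℝ) ≤ (1 - 4*b^2)^q0 := by
    have h := one_add_mul_le_pow (a := -(4*b^2)) (by nlinarith) q0
    have hrw : (1:ℝ) + -(4*b^2) = 1 - 4*b^2 := by ring
    rw [hrw] at h
    nlinarith [h]
  have hthird : (1:ℝ)/3 ≤ (1 - 4*b^2)^q0 := by linarith
  have hconv := conv_aux b hb0 hb d
  -- identities
  have hid : (1/2 - b) ^ q0 * (1/2 + b) ^ (q0+d) + (1/2 + b) ^ q0 * (1/2 - b) ^ (q0+d)
      = ((1/4 : ℝ) * (1 - 4*b^2))^q0 * ((1/2 - b)^d + (1/2 + b)^d) := by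
    rw [show (1/4 : ℝ) * (1 - 4*b^2) = (1/2-b)*(1/2+b) by ring, pow_add, pow_add, mul_pow]
    ring
  have hpow : (1/2 : ℝ) ^ (2*q0 + d) = (1/4)^q0 * (1/2)^d := by
    rw [pow_add, pow_mul]; norm_num
  rw [hid, hpow, mul_pow]
  have h14 : (0:ℝ) ≤ (1/4:ℝ)^q0 := by positivity
  have step : (1/3 : ℝ) * (2*(1/2)^d) ≤ (1 - 4*b^2)^q0 * ((1/2 - b)^d + (1/2 + b)^d) :=
    mul_le_mul hthird hconv (by positivity) (le_of_lt (pow_pos h4 q0))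
  nlinarith [mul_le_mul_of_nonneg_left step h14]

theorem stmt_12 (b : ℝ) (hb0 : 0 < b) (hb : b < 1/2)
    (hbL : b ^ 2 * (⌈1 / b⌉₊ : ℝ) ≤ 1/3) (k q0 q1 : ℕ)
    (hk : k ≤ ⌈1 / b⌉₊) (hq : q0 + q1 = k) :
    (1/2 : ℝ) ^ k ≤ 3 * ((1/2) * ((1/2 - b) ^ q0 * (1/2 + b) ^ q1
      + (1/2 + b) ^ q0 * (1/2 - b) ^ q1)) := by
  rcases le_total q0 q1 with h | h
  · exact main_aux b hb0 hb hbL k q0 q1 hk hq h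
  · have := main_aux b hb0 hb hbL k q1 q0 hk (by omega) h
    nlinarith [this]
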